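/- Let q, N ∈ ℕ, B ≥ 1, and for each n = 1, …, N let σ_n be a polynomial of degree at most q all of whose coefficients lie in [−B, B], let b_n ∈ [−B, B], a_n ∈ ℝ, and let w_n ∈ ℝ^d be a unit vector. Let θ ∈ ℝ^d be a unit vector and ε ∈ (0, 1/2] with |w_nᵀθ| ≥ 1 − ε for all n. Let V ⊆ ℝ^d be a subspace with θ ⟂ V, and let P_V be the orthogonal projection onto V. Define f(x) = N^{−1} Σ_{n=1}^{N} a_n σ_n(w_nᵀx + b_n). Then there exists a constant C depending only on q and B such that E_{x∼N(0,I_d)}[|f(P_V x)|] ≤ N^{−1} Σ_{n=1}^{N} |a_n| |σ_n(b_n)| + C N^{−1} (Σ_{n=1}^{N} |a_n|) √ε. -/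

import Mathlib

open MeasureTheory ProbabilityTheory
open scoped RealInnerProductSpace BigOperators
open Real
open scoped NNReal ENNReal

noncomputable abbrev piγ (d : ℕ) : Measure (Fin d → ℝ) := Measure.pi fun _ => gaussianReal 0 1

lemma gauss_density_rw (c : ℝ) (x : ℝ) :
    gaussianPDFReal 0 1 x * rexp (c * x) = rexp (c ^ 2 / 2) * gaussianPDFReal c 1 x := by
  simp only [gaussianPDFReal, NNReal.coe_one, mul_one, sub_zero]
  rw [mul_assoc, mul_comm (rexp (c ^ 2 / 2)), mul_assoc, ← Real.exp_add, ← Real.exp_add]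
  congr 1
  ring

lemma gaussianReal_std_eq :
    gaussianReal 0 1
      = (volume : Measure ℝ).withDensity (fun x => ((gaussianPDFReal 0 1 x).toNNReal : ℝ≥0∞)) := by
  rw [gaussianReal_of_var_ne_zero 0 one_ne_zero]
  rfl

lemma integrable_exp_mul_gaussian (c : ℝ) :
    Integrable (fun x => rexp (c * x)) (gaussianReal 0 1) := by
  rw [gaussianReal_std_eq,
    integrable_withDensity_iff_integrable_smul
      ((measurable_gaussianPDFReal 0 1).real_toNNReal)]
  have : (fun x => (gaussianPDFReal 0 1 x).toNNReal • rexp (c * x))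
      = fun x => rexp (c ^ 2 / 2) * gaussianPDFReal c 1 x := by
    funext x
    rw [NNReal.smul_def, Real.coe_toNNReal _ (gaussianPDFReal_nonneg 0 1 x), smul_eq_mul,
      gauss_density_rw]
  rw [this]
  exact (integrable_gaussianPDFReal c 1).const_mul _

lemma integral_exp_mul_gaussian (c : ℝ) :
    ∫ x, rexp (c * x) ∂(gaussianReal 0 1) = rexp (c ^ 2 / 2) := by
  rw [gaussianReal_std_eq,
    integral_withDensity_eq_integral_smul
      ((measurable_gaussianPDFReal 0 1).real_toNNReal)]
  have : (fun x => (gaussianPDFReal 0 1 x).toNNReal • rexp (c * x))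
      = fun x => rexp (c ^ 2 / 2) * gaussianPDFReal c 1 x := by
    funext x
    rw [NNReal.smul_def, Real.coe_toNNReal _ (gaussianPDFReal_nonneg 0 1 x), smul_eq_mul,
      gauss_density_rw]
  rw [this, integral_const_mul, integral_gaussianPDFReal_eq_one c one_ne_zero, mul_one]

lemma exp_sum_eq_prod (d : ℕ) (v : Fin d → ℝ) (x : Fin d → ℝ) :
    rexp (∑ i, v i * x i) = ∏ i, rexp (v i * x i) := by
  rw [Real.exp_sum]

lemma integrable_exp_sum (d : ℕ) (v : Fin d → ℝ) :
    Integrable (fun x => rexp (∑ i, v i * x i)) (piγ d) := by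
  simp only [exp_sum_eq_prod]
  letI : MeasureSpace ℝ := ⟨gaussianReal 0 1⟩
  haveI : SigmaFinite (volume : Measure ℝ) := inferInstanceAs (SigmaFinite (gaussianReal 0 1))
  have : Integrable (fun x : Fin d → ℝ => ∏ i, rexp (v i * x i)) volume :=
    Integrable.fintype_prod (f := fun i t => rexp (v i * t))
      (fun i => integrable_exp_mul_gaussian (v i))
  exact this

lemma integral_exp_sum (d : ℕ) (v : Fin d → ℝ) :
    ∫ x, rexp (∑ i, v i * x i) ∂(piγ d) = rexp ((∑ i, v i ^ 2) / 2) := by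
  simp only [exp_sum_eq_prod]
  letI : MeasureSpace ℝ := ⟨gaussianReal 0 1⟩
  haveI : SigmaFinite (volume : Measure ℝ) := inferInstanceAs (SigmaFinite (gaussianReal 0 1))
  have h : ∫ x : Fin d → ℝ, ∏ i, rexp (v i * x i)
      = ∏ i, ∫ t : ℝ, rexp (v i * t) :=
    integral_fintype_prod_eq_prod (fun i t => rexp (v i * t))
  have h2 : (∫ x, ∏ i, rexp (v i * x i) ∂(piγ d)) = ∫ x : Fin d → ℝ, ∏ i, rexp (v i * x i) := rfl
  rw [h2, h]
  have : ∀ i, (∫ t : ℝ, rexp (v i * t)) = rexp (v i ^ 2 / 2) := fun i =>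
    integral_exp_mul_gaussian (v i)
  rw [Finset.prod_congr rfl (fun i _ => this i), ← Real.exp_sum, Finset.sum_div]

lemma continuous_T {d : ℕ} (v : Fin d → ℝ) :
    Continuous (fun x : Fin d → ℝ => ∑ i, v i * x i) :=
  continuous_finset_sum _ fun i _ => continuous_const.mul (continuous_apply i)

lemma smul_sum_eq {d : ℕ} (a : ℝ) (v : Fin d → ℝ) (x : Fin d → ℝ) :
    ∑ i, (a * v i) * x i = a * ∑ i, v i * x i := by
  rw [Finset.mul_sum]; exact Finset.sum_congr rfl fun i _ => by ring

lemma exp_abs_le {a t : ℝ} (ha : 0 ≤ a) :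
    rexp (a * |t|) ≤ rexp (a * t) + rexp ((-a) * t) := by
  rcases abs_cases t with ⟨h, _⟩ | ⟨h, _⟩
  · rw [h]; nlinarith [Real.exp_pos ((-a) * t)]
  · have h2 : a * |t| = (-a) * t := by rw [h]; ring
    rw [h2]; nlinarith [Real.exp_pos (a * t)]

lemma integrable_exp_abs_sum (d : ℕ) (a : ℝ) (ha : 0 ≤ a) (v : Fin d → ℝ) :
    Integrable (fun x => rexp (a * |∑ i, v i * x i|)) (piγ d) := by
  have hg : Integrable (fun x => rexp (∑ i, (a * v i) * x i)
      + rexp (∑ i, ((-a) * v i) * x i)) (piγ d) :=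
    (integrable_exp_sum d _).add (integrable_exp_sum d _)
  refine hg.mono' ?_ ?_
  · exact ((continuous_const.mul (continuous_T v).abs).rexp).aestronglyMeasurable
  · refine Filter.Eventually.of_forall fun x => ?_
    have h1 := exp_abs_le (t := ∑ i, v i * x i) ha
    rw [Real.norm_eq_abs, abs_exp, smul_sum_eq a v x, smul_sum_eq (-a) v x]
    exact h1

lemma integral_exp_abs_sum_le (d : ℕ) (a : ℝ) (ha : 0 ≤ a) (v : Fin d → ℝ) :
    ∫ x, rexp (a * |∑ i, v i * x i|) ∂(piγ d)
      ≤ 2 * rexp (a ^ 2 * (∑ i, v i ^ 2) / 2) := by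
  have hg : Integrable (fun x => rexp (∑ i, (a * v i) * x i)
      + rexp (∑ i, ((-a) * v i) * x i)) (piγ d) :=
    (integrable_exp_sum d _).add (integrable_exp_sum d _)
  have hle : ∫ x, rexp (a * |∑ i, v i * x i|) ∂(piγ d)
      ≤ ∫ x, (rexp (∑ i, (a * v i) * x i) + rexp (∑ i, ((-a) * v i) * x i)) ∂(piγ d) := by
    refine integral_mono_of_nonneg (Filter.Eventually.of_forall fun x => (Real.exp_pos _).le)
      hg (Filter.Eventually.of_forall fun x => ?_)
    show rexp (a * |∑ i, v i * x i|)
      ≤ rexp (∑ i, (a * v i) * x i) + rexp (∑ i, ((-a) * v i) * x i)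
    rw [smul_sum_eq a v x, smul_sum_eq (-a) v x]
    exact exp_abs_le ha
  refine hle.trans ?_
  rw [integral_add (integrable_exp_sum d _) (integrable_exp_sum d _),
    integral_exp_sum, integral_exp_sum]
  have hs : ∀ s : ℝ, (∑ i, (s * v i) ^ 2) = s ^ 2 * ∑ i, v i ^ 2 := by
    intro s; rw [Finset.mul_sum]; exact Finset.sum_congr rfl fun i _ => by ring
  rw [hs a, hs (-a), neg_pow, show ((-1:ℝ))^2 = 1 by norm_num, one_mul]
  ring_nf
  linarith [Real.exp_pos (a ^ 2 * (∑ i, v i ^ 2) / 2)]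

lemma moment (d : ℕ) (q : ℕ) (v : Fin d → ℝ) (hv : ∑ i, v i ^ 2 ≤ 1) :
    Integrable (fun x => |∑ i, v i * x i| * rexp ((q:ℝ) * |∑ i, v i * x i|)) (piγ d) ∧
    ∫ x, |∑ i, v i * x i| * rexp ((q:ℝ) * |∑ i, v i * x i|) ∂(piγ d)
      ≤ 2 * rexp (((q:ℝ) + 1) ^ 2 / 2) * Real.sqrt (∑ i, v i ^ 2) := by
  have hsum0 : 0 ≤ ∑ i, v i ^ 2 := Finset.sum_nonneg fun i _ => sq_nonneg _
  set s := Real.sqrt (∑ i, v i ^ 2) with hs_def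
  have hs2 : s ^ 2 = ∑ i, v i ^ 2 := Real.sq_sqrt hsum0
  have hs_nonneg : 0 ≤ s := Real.sqrt_nonneg _
  have hs1 : s ≤ 1 := by
    rw [hs_def, show (1:ℝ) = Real.sqrt 1 by rw [Real.sqrt_one]]
    exact Real.sqrt_le_sqrt hv
  by_cases h0 : s = 0
  · have hzero : ∀ i, v i = 0 := by
      have : ∑ i, v i ^ 2 = 0 := by rw [← hs2, h0]; ring
      intro i
      have := (Finset.sum_eq_zero_iff_of_nonneg (fun i _ => sq_nonneg (v i))).mp this i
        (Finset.mem_univ i)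
      exact pow_eq_zero_iff (two_ne_zero) |>.mp this
    have hfun : (fun x : Fin d → ℝ => |∑ i, v i * x i| * rexp ((q:ℝ) * |∑ i, v i * x i|))
        = fun _ => 0 := by
      funext x
      simp [hzero]
    rw [hfun]
    refine ⟨integrable_zero _ _ _, ?_⟩
    rw [integral_zero, h0, mul_zero]
  · have hspos : 0 < s := lt_of_le_of_ne hs_nonneg (Ne.symm h0)
    set a : ℝ := (q:ℝ) + 1 / s with ha_def
    have ha : 0 ≤ a := by positivity
    have hpt : ∀ t : ℝ, |t| * rexp ((q:ℝ) * |t|) ≤ s * rexp (a * |t|) := by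
      intro t
      have h1 : |t| ≤ s * rexp (|t| / s) := by
        have h2 : |t| / s ≤ rexp (|t| / s) := by
          have := Real.add_one_le_exp (|t| / s)
          linarith
        calc |t| = s * (|t| / s) := by field_simp
        _ ≤ s * rexp (|t| / s) := by
          exact mul_le_mul_of_nonneg_left h2 hs_nonneg
      calc |t| * rexp ((q:ℝ) * |t|) ≤ (s * rexp (|t| / s)) * rexp ((q:ℝ) * |t|) :=
            mul_le_mul_of_nonneg_right h1 (Real.exp_pos _).le
      _ = s * rexp (a * |t|) := by
          rw [mul_assoc, ← Real.exp_add]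
          congr 2
          rw [ha_def]
          field_simp
          ring
    have hint : Integrable (fun x => s * rexp (a * |∑ i, v i * x i|)) (piγ d) :=
      (integrable_exp_abs_sum d a ha v).const_mul s
    have hmeas : Continuous (fun x : Fin d → ℝ =>
        |∑ i, v i * x i| * rexp ((q:ℝ) * |∑ i, v i * x i|)) :=
      ((continuous_T v).abs).mul ((continuous_const.mul (continuous_T v).abs).rexp)
    have hInt : Integrable (fun x : Fin d → ℝ =>
        |∑ i, v i * x i| * rexp ((q:ℝ) * |∑ i, v i * x i|)) (piγ d) := by
      refine hint.mono' hmeas.aestronglyMeasurable (Filter.Eventually.of_forall fun x => ?_)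
      rw [Real.norm_eq_abs, abs_of_nonneg (by positivity)]
      exact hpt _
    refine ⟨hInt, ?_⟩
    have step1 : ∫ x, |∑ i, v i * x i| * rexp ((q:ℝ) * |∑ i, v i * x i|) ∂(piγ d)
        ≤ ∫ x, s * rexp (a * |∑ i, v i * x i|) ∂(piγ d) :=
      integral_mono hInt hint (fun x => hpt _)
    refine step1.trans ?_
    rw [integral_const_mul]
    have step2 := integral_exp_abs_sum_le d a ha v
    have step3 : a ^ 2 * (∑ i, v i ^ 2) / 2 ≤ ((q:ℝ) + 1) ^ 2 / 2 := by
      have h4 : a ^ 2 * (∑ i, v i ^ 2) = ((q:ℝ) * s + 1) ^ 2 := by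
        rw [← hs2, ha_def]
        field_simp
      rw [h4]
      have h5 : (q:ℝ) * s + 1 ≤ (q:ℝ) + 1 := by nlinarith [Nat.cast_nonneg (α := ℝ) q]
      have h6 : 0 ≤ (q:ℝ) * s + 1 := by positivity
      nlinarith
    calc s * ∫ x, rexp (a * |∑ i, v i * x i|) ∂(piγ d)
        ≤ s * (2 * rexp (a ^ 2 * (∑ i, v i ^ 2) / 2)) :=
          mul_le_mul_of_nonneg_left step2 hs_nonneg
      _ ≤ s * (2 * rexp (((q:ℝ) + 1) ^ 2 / 2)) := by
          have := Real.exp_le_exp.mpr step3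
          nlinarith [Real.exp_pos (a ^ 2 * (∑ i, v i ^ 2) / 2)]
      _ = 2 * rexp (((q:ℝ) + 1) ^ 2 / 2) * s := by ring

lemma pow_abs_le (i : ℕ) (q : ℕ) (hi : i ≤ q) (hq : 1 ≤ q) (t : ℝ) :
    |t| ^ i ≤ (q.factorial : ℝ) * rexp ((q:ℝ) * |t|) := by
  have h1 : |t| ^ i / (i.factorial : ℝ) ≤ rexp |t| :=
    Real.pow_div_factorial_le_exp _ (abs_nonneg t) i
  have h2 : rexp |t| ≤ rexp ((q:ℝ) * |t|) := by
    apply Real.exp_le_exp.mpr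
    nlinarith [abs_nonneg t, (by exact_mod_cast hq : (1:ℝ) ≤ (q:ℝ))]
  have h3 : (i.factorial : ℝ) ≤ (q.factorial : ℝ) := by
    exact_mod_cast Nat.factorial_le hi
  have hfac : (0:ℝ) < (i.factorial : ℝ) := by exact_mod_cast i.factorial_pos
  have h4 : |t| ^ i ≤ (i.factorial : ℝ) * rexp |t| := by
    rw [div_le_iff₀ hfac] at h1
    linarith [h1]
  calc |t| ^ i ≤ (i.factorial : ℝ) * rexp |t| := h4
    _ ≤ (q.factorial : ℝ) * rexp ((q:ℝ) * |t|) := by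
        have := Real.exp_pos (|t|)
        nlinarith [Real.exp_pos ((q:ℝ) * |t|)]

lemma pow_diff_bound (q : ℕ) (B : ℝ) (hB : 1 ≤ B) (b : ℝ) (hb : |b| ≤ B)
    (k : ℕ) (hk : k ≤ q) (t : ℝ) :
    |(t + b) ^ k - b ^ k|
      ≤ ((q.factorial : ℝ) * B ^ q * 2 ^ q) * (|t| * rexp ((q:ℝ) * |t|)) := by
  have hB0 : (0:ℝ) ≤ B := le_trans zero_le_one hB
  have hexp : (0:ℝ) < rexp ((q:ℝ) * |t|) := Real.exp_pos _
  have hsum : (t + b) ^ k = (∑ i ∈ Finset.range k,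
      t ^ (i+1) * b ^ (k - (i+1)) * (k.choose (i+1) : ℝ)) + b ^ k := by
    rw [add_pow, Finset.sum_range_succ']
    simp
  have hdiff : (t + b) ^ k - b ^ k
      = ∑ i ∈ Finset.range k, t ^ (i+1) * b ^ (k - (i+1)) * (k.choose (i+1) : ℝ) := by
    rw [hsum]; ring
  rw [hdiff]
  have hM : ∀ i ∈ Finset.range k,
      |t ^ (i+1) * b ^ (k - (i+1)) * (k.choose (i+1) : ℝ)|
        ≤ (k.choose (i+1) : ℝ) * (((q.factorial : ℝ) * B ^ q) * (|t| * rexp ((q:ℝ) * |t|))) := by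
    intro i hi
    have hik : i < k := Finset.mem_range.mp hi
    have hq1 : 1 ≤ q := le_trans (Nat.one_le_iff_ne_zero.mpr (by omega)) hk
    have hiq : i ≤ q := by omega
    rw [abs_mul, abs_mul, abs_pow, abs_pow, Nat.abs_cast]
    have h1 : |t| ^ (i+1) ≤ ((q.factorial : ℝ) * rexp ((q:ℝ) * |t|)) * |t| := by
      rw [pow_succ]
      exact mul_le_mul_of_nonneg_right (pow_abs_le i q hiq hq1 t) (abs_nonneg t)
    have h2 : |b| ^ (k - (i+1)) ≤ B ^ q := by
      calc |b| ^ (k - (i+1)) ≤ B ^ (k - (i+1)) := pow_le_pow_left₀ (abs_nonneg b) hb _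
        _ ≤ B ^ q := pow_le_pow_right₀ hB (by omega)
    have hchoose : (0:ℝ) ≤ (k.choose (i+1) : ℝ) := Nat.cast_nonneg _
    have ht1 : (0:ℝ) ≤ |t| ^ (i+1) := pow_nonneg (abs_nonneg t) _
    have hb1 : (0:ℝ) ≤ |b| ^ (k - (i+1)) := pow_nonneg (abs_nonneg b) _
    have key : |t| ^ (i+1) * |b| ^ (k - (i+1))
        ≤ ((q.factorial : ℝ) * B ^ q) * (|t| * rexp ((q:ℝ) * |t|)) := by
      calc |t| ^ (i+1) * |b| ^ (k - (i+1))
          ≤ (((q.factorial : ℝ) * rexp ((q:ℝ) * |t|)) * |t|) * B ^ q := by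
            apply mul_le_mul h1 h2 hb1
            positivity
        _ = ((q.factorial : ℝ) * B ^ q) * (|t| * rexp ((q:ℝ) * |t|)) := by ring
    calc |t| ^ (i+1) * |b| ^ (k - (i+1)) * (k.choose (i+1) : ℝ)
        ≤ (((q.factorial : ℝ) * B ^ q) * (|t| * rexp ((q:ℝ) * |t|))) * (k.choose (i+1) : ℝ) :=
          mul_le_mul_of_nonneg_right key hchoose
      _ = (k.choose (i+1) : ℝ) * (((q.factorial : ℝ) * B ^ q) * (|t| * rexp ((q:ℝ) * |t|))) := by
          ring
  calc |∑ i ∈ Finset.range k, t ^ (i+1) * b ^ (k - (i+1)) * (k.choose (i+1) : ℝ)|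
      ≤ ∑ i ∈ Finset.range k, |t ^ (i+1) * b ^ (k - (i+1)) * (k.choose (i+1) : ℝ)| :=
        Finset.abs_sum_le_sum_abs _ _
    _ ≤ ∑ i ∈ Finset.range k,
        (k.choose (i+1) : ℝ) * (((q.factorial : ℝ) * B ^ q) * (|t| * rexp ((q:ℝ) * |t|))) :=
        Finset.sum_le_sum hM
    _ = (∑ i ∈ Finset.range k, (k.choose (i+1) : ℝ))
        * (((q.factorial : ℝ) * B ^ q) * (|t| * rexp ((q:ℝ) * |t|))) := by
        rw [Finset.sum_mul]
    _ ≤ ((2:ℝ) ^ q) * (((q.factorial : ℝ) * B ^ q) * (|t| * rexp ((q:ℝ) * |t|))) := by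
        apply mul_le_mul_of_nonneg_right _ (by positivity)
        have hnat : (∑ i ∈ Finset.range k, k.choose (i+1)) ≤ 2 ^ q := by
          have h1 : (∑ i ∈ Finset.range k, k.choose (i+1)) + k.choose 0
              = ∑ j ∈ Finset.range (k+1), k.choose j := (Finset.sum_range_succ' _ _).symm
          have h2 : ∑ j ∈ Finset.range (k+1), k.choose j = 2 ^ k := Nat.sum_range_choose k
          have h3 : (2:ℕ) ^ k ≤ 2 ^ q := Nat.pow_le_pow_right (by norm_num) hk
          omega
        calc (∑ i ∈ Finset.range k, (k.choose (i+1) : ℝ))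
            = ((∑ i ∈ Finset.range k, k.choose (i+1) : ℕ) : ℝ) := by push_cast; rfl
          _ ≤ ((2:ℕ) ^ q : ℝ) := by exact_mod_cast hnat
          _ = (2:ℝ) ^ q := by push_cast; rfl
    _ = ((q.factorial : ℝ) * B ^ q * 2 ^ q) * (|t| * rexp ((q:ℝ) * |t|)) := by ring

lemma poly_bound (q : ℕ) (B : ℝ) (hB : 1 ≤ B) (σ : Polynomial ℝ) (hdeg : σ.natDegree ≤ q)
    (hcoef : ∀ k, |σ.coeff k| ≤ B) (b : ℝ) (hb : |b| ≤ B) (t : ℝ) :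
    |σ.eval (t + b)| ≤ |σ.eval b|
      + (((q:ℝ)+1) * B * ((q.factorial : ℝ) * B ^ q * 2 ^ q)) * (|t| * rexp ((q:ℝ) * |t|)) := by
  have hB0 : (0:ℝ) ≤ B := le_trans zero_le_one hB
  have hlt : σ.natDegree < q + 1 := Nat.lt_succ_of_le hdeg
  have he1 : σ.eval (t + b) = ∑ k ∈ Finset.range (q+1), σ.coeff k * (t + b) ^ k :=
    Polynomial.eval_eq_sum_range' hlt _
  have he2 : σ.eval b = ∑ k ∈ Finset.range (q+1), σ.coeff k * b ^ k :=
    Polynomial.eval_eq_sum_range' hlt _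
  have hdiff : σ.eval (t + b) - σ.eval b
      = ∑ k ∈ Finset.range (q+1), σ.coeff k * ((t + b) ^ k - b ^ k) := by
    rw [he1, he2, ← Finset.sum_sub_distrib]
    exact Finset.sum_congr rfl fun k _ => by ring
  have hbd : |σ.eval (t + b) - σ.eval b|
      ≤ (((q:ℝ)+1) * B * ((q.factorial : ℝ) * B ^ q * 2 ^ q)) * (|t| * rexp ((q:ℝ) * |t|)) := by
    rw [hdiff]
    calc |∑ k ∈ Finset.range (q+1), σ.coeff k * ((t + b) ^ k - b ^ k)|
        ≤ ∑ k ∈ Finset.range (q+1), |σ.coeff k * ((t + b) ^ k - b ^ k)| :=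
          Finset.abs_sum_le_sum_abs _ _
      _ ≤ ∑ _k ∈ Finset.range (q+1),
          B * (((q.factorial : ℝ) * B ^ q * 2 ^ q) * (|t| * rexp ((q:ℝ) * |t|))) :=
          Finset.sum_le_sum (fun k hk => by
            rw [abs_mul]
            exact mul_le_mul (hcoef k)
              (pow_diff_bound q B hB b hb k (by have := Finset.mem_range.mp hk; omega) t)
              (abs_nonneg _) hB0)
      _ = (((q:ℝ)+1) * B * ((q.factorial : ℝ) * B ^ q * 2 ^ q)) * (|t| * rexp ((q:ℝ) * |t|)) := by
          rw [Finset.sum_const, Finset.card_range]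
          push_cast
          ring
  have htri := abs_sub_abs_le_abs_sub (σ.eval (t + b)) (σ.eval b)
  linarith

/-- The standard Gaussian measure `N(0, I_d)` on `ℝ^d` (as `EuclideanSpace ℝ (Fin d)`). -/
noncomputable def stdGaussian (d : ℕ) : Measure (EuclideanSpace ℝ (Fin d)) :=
  Measure.map (⇑(EuclideanSpace.equiv (Fin d) ℝ).symm)
    (Measure.pi fun _ : Fin d => gaussianReal 0 1)

/-- Orthogonal projection onto a subspace `V ⊆ ℝ^d`, viewed as a map `ℝ^d → ℝ^d`. -/
noncomputable def projV {d : ℕ} (V : Submodule ℝ (EuclideanSpace ℝ (Fin d)))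
    (x : EuclideanSpace ℝ (Fin d)) : EuclideanSpace ℝ (Fin d) :=
  (Submodule.orthogonalProjectionOnto V x : EuclideanSpace ℝ (Fin d))

/-- The two-layer network `f(x) = N⁻¹ Σ_n a_n σ_n(w_nᵀx + b_n)`. -/
noncomputable def net {d N : ℕ} (σ : Fin N → Polynomial ℝ) (a b : Fin N → ℝ)
    (w : Fin N → EuclideanSpace ℝ (Fin d)) (x : EuclideanSpace ℝ (Fin d)) : ℝ :=
  (N : ℝ)⁻¹ * ∑ n, a n * (σ n).eval (⟪w n, x⟫ + b n)




/-- constant -/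
noncomputable def C0 (q : ℕ) (B : ℝ) : ℝ :=
  (((q:ℝ)+1) * B * ((q.factorial : ℝ) * B ^ q * 2 ^ q)) * (2 * rexp (((q:ℝ)+1) ^ 2 / 2))

lemma C0_nonneg (q : ℕ) (B : ℝ) (hB : 1 ≤ B) : 0 ≤ C0 q B := by
  unfold C0
  have h : (0:ℝ) ≤ B := le_trans zero_le_one hB
  positivity

lemma neuron (q : ℕ) (B : ℝ) (hB : 1 ≤ B) (σ : Polynomial ℝ) (hdeg : σ.natDegree ≤ q)
    (hcoef : ∀ k, |σ.coeff k| ≤ B) (b : ℝ) (hb : |b| ≤ B)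
    {d : ℕ} (v : Fin d → ℝ) (hv : ∑ i, v i ^ 2 ≤ 1) :
    Integrable (fun x => |σ.eval ((∑ i, v i * x i) + b)|) (piγ d) ∧
    ∫ x, |σ.eval ((∑ i, v i * x i) + b)| ∂(piγ d)
      ≤ |σ.eval b| + C0 q B * Real.sqrt (∑ i, v i ^ 2) := by
  obtain ⟨hIm, hEm⟩ := moment d q v hv
  set D : ℝ := ((q:ℝ)+1) * B * ((q.factorial : ℝ) * B ^ q * 2 ^ q) with hD
  have hD0 : 0 ≤ D := by
    have h : (0:ℝ) ≤ B := le_trans zero_le_one hB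
    positivity
  set M : (Fin d → ℝ) → ℝ := fun x =>
    |σ.eval b| + D * (|∑ i, v i * x i| * rexp ((q:ℝ) * |∑ i, v i * x i|)) with hM
  have hIM : Integrable M (piγ d) := (integrable_const _).add (hIm.const_mul D)
  have hpt : ∀ x : Fin d → ℝ, |σ.eval ((∑ i, v i * x i) + b)| ≤ M x := fun x =>
    poly_bound q B hB σ hdeg hcoef b hb _
  have hcont : Continuous (fun x : Fin d → ℝ => |σ.eval ((∑ i, v i * x i) + b)|) :=
    (σ.continuous.comp ((continuous_T v).add continuous_const)).abs
  have hInt : Integrable (fun x => |σ.eval ((∑ i, v i * x i) + b)|) (piγ d) := by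
    refine hIM.mono' hcont.aestronglyMeasurable (Filter.Eventually.of_forall fun x => ?_)
    rw [Real.norm_eq_abs, abs_abs]
    exact hpt x
  refine ⟨hInt, ?_⟩
  calc ∫ x, |σ.eval ((∑ i, v i * x i) + b)| ∂(piγ d)
      ≤ ∫ x, M x ∂(piγ d) := integral_mono hInt hIM hpt
    _ = |σ.eval b| + D * ∫ x, |∑ i, v i * x i| * rexp ((q:ℝ) * |∑ i, v i * x i|) ∂(piγ d) := by
        rw [hM, integral_add (integrable_const _) (hIm.const_mul D), integral_const,
          integral_const_mul]
        simp
    _ ≤ |σ.eval b| + D * (2 * rexp (((q:ℝ) + 1) ^ 2 / 2) * Real.sqrt (∑ i, v i ^ 2)) := by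
        have := mul_le_mul_of_nonneg_left hEm hD0
        linarith
    _ = |σ.eval b| + C0 q B * Real.sqrt (∑ i, v i ^ 2) := by
        rw [C0, hD]; ring

lemma proj_norm_sq_le {d : ℕ} (V : Submodule ℝ (EuclideanSpace ℝ (Fin d)))
    (θ : EuclideanSpace ℝ (Fin d)) (hθ : ‖θ‖ = 1) (hθV : θ ∈ Vᗮ)
    (w : EuclideanSpace ℝ (Fin d)) (hw : ‖w‖ = 1) (ε : ℝ) (hε1 : ε ≤ 1/2)
    (hcor : 1 - ε ≤ |⟪w, θ⟫|) :
    ‖projV V w‖ ^ 2 ≤ 2 * ε := by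
  have h1 : ‖w‖ ^ 2 = ‖Submodule.orthogonalProjectionOnto V w‖ ^ 2 + ‖Submodule.orthogonalProjectionOnto Vᗮ w‖ ^ 2 :=
    Submodule.norm_sq_eq_add_norm_sq_projection w V
  have hfix : (Submodule.orthogonalProjectionOnto Vᗮ θ : EuclideanSpace ℝ (Fin d)) = θ :=
    Submodule.starProjection_eq_self_iff.mpr hθV
  have h2 : ⟪w, θ⟫ = ⟪(Submodule.orthogonalProjectionOnto Vᗮ w : EuclideanSpace ℝ (Fin d)), θ⟫ := by
    conv_lhs => rw [← hfix]
    exact (Submodule.inner_starProjection_left_eq_right Vᗮ w θ).symm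
  have h3 : |⟪(Submodule.orthogonalProjectionOnto Vᗮ w : EuclideanSpace ℝ (Fin d)), θ⟫|
      ≤ ‖Submodule.orthogonalProjectionOnto Vᗮ w‖ := by
    have := abs_real_inner_le_norm
      ((Submodule.orthogonalProjectionOnto Vᗮ w : EuclideanSpace ℝ (Fin d))) θ
    rw [hθ, mul_one] at this
    exact this
  have h4 : 1 - ε ≤ ‖Submodule.orthogonalProjectionOnto Vᗮ w‖ := by
    rw [h2] at hcor; exact le_trans hcor h3
  have h5 : ‖projV V w‖ = ‖Submodule.orthogonalProjectionOnto V w‖ := rfl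
  rw [h5]
  rw [hw] at h1
  nlinarith [norm_nonneg (Submodule.orthogonalProjectionOnto Vᗮ w), norm_nonneg (Submodule.orthogonalProjectionOnto V w)]


/-- If every neuron direction `w_n` is `ε`-aligned with a common unit
direction `θ` orthogonal to the subspace `V`, then the Gaussian `L¹` norm of the network
restricted to `V` is at most `N⁻¹ Σ_n |a_n| |σ_n(b_n)| + C N⁻¹ (Σ_n |a_n|) √ε`, where `C`
depends only on the degree bound `q` and the coefficient bound `B`. -/
theorem network_restriction_L1_theta_perp_V (q : ℕ) (B : ℝ) (hB : 1 ≤ B) :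
    ∃ C : ℝ, ∀ (d N : ℕ) (σ : Fin N → Polynomial ℝ),
      (∀ n, (σ n).natDegree ≤ q) → (∀ n k, |(σ n).coeff k| ≤ B) →
      ∀ b : Fin N → ℝ, (∀ n, |b n| ≤ B) →
      ∀ (a : Fin N → ℝ) (w : Fin N → EuclideanSpace ℝ (Fin d)), (∀ n, ‖w n‖ = 1) →
      ∀ θ : EuclideanSpace ℝ (Fin d), ‖θ‖ = 1 →
      ∀ ε : ℝ, 0 < ε → ε ≤ 1 / 2 → (∀ n, 1 - ε ≤ |⟪w n, θ⟫|) →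
      ∀ V : Submodule ℝ (EuclideanSpace ℝ (Fin d)), θ ∈ Vᗮ →
        (∫ x, |net σ a b w (projV V x)| ∂(stdGaussian d))
          ≤ (N : ℝ)⁻¹ * (∑ n, |a n| * |(σ n).eval (b n)|)
            + C * (N : ℝ)⁻¹ * (∑ n, |a n|) * Real.sqrt ε := by
  refine ⟨C0 q B * Real.sqrt 2, ?_⟩
  intro d N σ hdeg hcoef b hb a w hw θ hθ ε hε0 hε1 hcor V hθV
  have hC0 : 0 ≤ C0 q B := C0_nonneg q B hB
  set e : (Fin d → ℝ) ≃ᵐ EuclideanSpace ℝ (Fin d) :=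
    (EuclideanSpace.equiv (Fin d) ℝ).symm.toHomeomorph.toMeasurableEquiv with he
  have hmeq : stdGaussian d = Measure.map (⇑e) (piγ d) := rfl
  rw [hmeq, MeasureTheory.integral_map_equiv]
  set v : Fin N → Fin d → ℝ := fun n i => projV V (w n) i with hv
  have hinner : ∀ (n : Fin N) (x : Fin d → ℝ), ⟪w n, projV V (e x)⟫ = ∑ i, v n i * x i := by
    intro n x
    have h1 : ⟪w n, projV V (e x)⟫
        = ⟪projV V (w n), (e x : EuclideanSpace ℝ (Fin d))⟫ := by
      unfold projV
      exact (Submodule.inner_starProjection_left_eq_right V (w n) (e x)).symm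
    rw [h1, PiLp.inner_apply]
    simp only [RCLike.inner_apply, conj_trivial]
    exact Finset.sum_congr rfl fun i _ => mul_comm _ _
  have hnormsq : ∀ n, ∑ i, v n i ^ 2 = ‖projV V (w n)‖ ^ 2 := by
    intro n
    rw [PiLp.norm_sq_eq_of_L2]
    exact Finset.sum_congr rfl fun i _ => by rw [Real.norm_eq_abs, sq_abs]
  have hsum2ε : ∀ n, ∑ i, v n i ^ 2 ≤ 2 * ε := by
    intro n
    rw [hnormsq n]
    exact proj_norm_sq_le V θ hθ hθV (w n) (hw n) ε hε1 (hcor n)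
  have hsum1 : ∀ n, ∑ i, v n i ^ 2 ≤ 1 := fun n => (hsum2ε n).trans (by linarith)
  have hneuron := fun n =>
    neuron q B hB (σ n) (hdeg n) (hcoef n) (b n) (hb n) (v n) (hsum1 n)
  have hsqrt : ∀ n, Real.sqrt (∑ i, v n i ^ 2) ≤ Real.sqrt 2 * Real.sqrt ε := by
    intro n
    rw [← Real.sqrt_mul (by norm_num : (0:ℝ) ≤ 2) ε]
    exact Real.sqrt_le_sqrt (hsum2ε n)
  set G : (Fin d → ℝ) → ℝ := fun x =>
    (N:ℝ)⁻¹ * ∑ n, |a n| * |(σ n).eval ((∑ i, v n i * x i) + b n)| with hG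
  have hIG : Integrable G (piγ d) :=
    (integrable_finset_sum _ fun n _ => ((hneuron n).1.const_mul |a n|)).const_mul (N:ℝ)⁻¹
  have hpt : ∀ x, |net σ a b w (projV V (e x))| ≤ G x := by
    intro x
    have hnet : net σ a b w (projV V (e x))
        = (N:ℝ)⁻¹ * ∑ n, a n * (σ n).eval ((∑ i, v n i * x i) + b n) := by
      unfold net
      congr 1
      exact Finset.sum_congr rfl fun n _ => by rw [hinner n x]
    rw [hG, hnet, abs_mul, abs_inv, Nat.abs_cast]
    refine mul_le_mul_of_nonneg_left ?_ (by positivity)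
    refine (Finset.abs_sum_le_sum_abs _ _).trans (Finset.sum_le_sum fun n _ => ?_)
    rw [abs_mul]
  have step1 : ∫ x, |net σ a b w (projV V (e x))| ∂(piγ d) ≤ ∫ x, G x ∂(piγ d) :=
    integral_mono_of_nonneg (Filter.Eventually.of_forall fun x => abs_nonneg _) hIG
      (Filter.Eventually.of_forall hpt)
  have step2 : ∫ x, G x ∂(piγ d)
      = (N:ℝ)⁻¹ * ∑ n, |a n| * ∫ x, |(σ n).eval ((∑ i, v n i * x i) + b n)| ∂(piγ d) := by
    rw [hG, integral_const_mul,
      integral_finset_sum _ (fun n _ => ((hneuron n).1.const_mul |a n|))]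
    congr 1
    exact Finset.sum_congr rfl fun n _ => integral_const_mul _ _
  have step3 : (N:ℝ)⁻¹ * ∑ n, |a n| * ∫ x, |(σ n).eval ((∑ i, v n i * x i) + b n)| ∂(piγ d)
      ≤ (N:ℝ)⁻¹ * ∑ n, |a n|
          * (|(σ n).eval (b n)| + C0 q B * (Real.sqrt 2 * Real.sqrt ε)) := by
    refine mul_le_mul_of_nonneg_left (Finset.sum_le_sum fun n _ => ?_) (by positivity)
    refine mul_le_mul_of_nonneg_left ?_ (abs_nonneg _)
    refine (hneuron n).2.trans ?_
    exact add_le_add_right (mul_le_mul_of_nonneg_left (hsqrt n) hC0) _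
  refine (step1.trans (step2.le.trans step3)).trans (le_of_eq ?_)
  have hexpand : ∑ n, |a n| * (|(σ n).eval (b n)| + C0 q B * (Real.sqrt 2 * Real.sqrt ε))
      = (∑ n, |a n| * |(σ n).eval (b n)|)
        + (∑ n, |a n|) * (C0 q B * (Real.sqrt 2 * Real.sqrt ε)) := by
    calc ∑ n, |a n| * (|(σ n).eval (b n)| + C0 q B * (Real.sqrt 2 * Real.sqrt ε))
        = ∑ n, (|a n| * |(σ n).eval (b n)|
            + |a n| * (C0 q B * (Real.sqrt 2 * Real.sqrt ε))) :=
          Finset.sum_congr rfl fun n _ => by ring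
      _ = (∑ n, |a n| * |(σ n).eval (b n)|)
          + ∑ n, |a n| * (C0 q B * (Real.sqrt 2 * Real.sqrt ε)) := Finset.sum_add_distrib
      _ = (∑ n, |a n| * |(σ n).eval (b n)|)
          + (∑ n, |a n|) * (C0 q B * (Real.sqrt 2 * Real.sqrt ε)) := by
          rw [← Finset.sum_mul]
  rw [hexpand]
  ring
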